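/- Let d ≥ 1, z ∈ S^{d−1}, and ℓ ∈ {1,…,d}. There exist constants c₄ ∈ (0,∞) and c > 0, depending only on d and ℓ, such that for all 0 < a < c₄, ν_ℓ({L ∈ G(d,ℓ) : ∠(z, L) ≤ a}) ≥ c·a^{d−ℓ}. -/

import Mathlib

open MeasureTheory ProbabilityTheory Real Set Filter
open scoped ENNReal NNReal RealInnerProductSpace MeasureTheory

set_option maxHeartbeats 1000000

noncomputable section

abbrev Euc (d : ℕ) := EuclideanSpace ℝ (Fin d)

/-- The standard Gaussian measure `γ_d` on `ℝ^d`. -/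
noncomputable def stdGaussian (d : ℕ) : Measure (Euc d) :=
  volume.withDensity fun x => ENNReal.ofReal ((2 * π) ^ (-(d : ℝ) / 2) * Real.exp (-‖x‖ ^ 2 / 2))

/-- Measurable structure on the space of linear subspaces of `ℝ^d`, via the embedding sending a
subspace to the orthogonal projection onto it. -/
noncomputable instance grassMS (d : ℕ) : MeasurableSpace (Submodule ℝ (Euc d)) :=
  MeasurableSpace.comap
    (fun L => (L.subtypeL.comp (L.orthogonalProjection) : Euc d →L[ℝ] Euc d))
    (borel _)

/-- `ν` is the Haar probability measure on the Grassmannian `G(d,ℓ)`: a probability measure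
concentrated on the `ℓ`-dimensional subspaces, invariant under the orthogonal group. -/
structure IsHaarGrassmannian (d ℓ : ℕ) (ν : Measure (Submodule ℝ (Euc d))) : Prop where
  prob : IsProbabilityMeasure ν
  dim : ν {L | Module.finrank ℝ L ≠ ℓ} = 0
  inv : ∀ g : Euc d ≃ₗᵢ[ℝ] Euc d,
    Measure.map (fun L => L.map (g.toLinearEquiv : Euc d →ₗ[ℝ] Euc d)) ν = ν

/-- `κ_j`, the volume of the `j`-dimensional unit ball. -/
noncomputable def ballVol (j : ℕ) : ℝ := π ^ ((j : ℝ) / 2) / Real.Gamma (1 + (j : ℝ) / 2)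

/-- `vol_ℓ(K|L)`: the `ℓ`-dimensional (Hausdorff = Lebesgue) measure of the orthogonal
projection of `K` onto the subspace `L`. -/
noncomputable def projVol (d ℓ : ℕ) (L : Submodule ℝ (Euc d)) (K : Set (Euc d)) : ℝ :=
  (μH[(ℓ : ℝ)] ((fun x => (L.orthogonalProjection x : Euc d)) '' K)).toReal

/-- The `ℓ`-th intrinsic volume `V_ℓ(K)`, defined via Kubota's formula with respect to a
(Haar) measure `ν` on the Grassmannian. -/
noncomputable def intrinsicVol (d ℓ : ℕ) (ν : Measure (Submodule ℝ (Euc d)))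
    (K : Set (Euc d)) : ℝ :=
  (d.choose ℓ) * (ballVol d / (ballVol ℓ * ballVol (d - ℓ))) * ∫ L, projVol d ℓ L K ∂ν


/-! ### Auxiliary material -/


def projCLM (d : ℕ) (L : Submodule ℝ (Euc d)) : Euc d →L[ℝ] Euc d :=
  L.subtypeL.comp (L.orthogonalProjection)

lemma measurable_projCLM (d : ℕ) : Measurable (projCLM d) := fun _ hs => MeasurableSpace.measurableSet_comap.mpr ⟨_, hs, rfl⟩

lemma char_aux (d : ℕ) (a : ℝ) (ha : 0 < Real.cos a) (z : Euc d) :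
    {L : Submodule ℝ (Euc d) | ∃ x : Euc d, x ∈ L ∧ x ≠ 0 ∧ Real.cos a * ‖x‖ ≤ (inner ℝ z x : ℝ)}
      = {L | Real.cos a ≤ ‖projCLM d L z‖} := by
  ext L
  simp only [mem_setOf_eq]
  constructor
  · rintro ⟨x, hxL, hx0, hx⟩
    have h1 : ⟪z - (L.orthogonalProjection z : Euc d), x⟫ = 0 :=
      L.starProjection_inner_eq_zero z x hxL
    have h2 : (inner ℝ z x : ℝ) = ⟪(L.orthogonalProjection z : Euc d), x⟫ := by
      rw [inner_sub_left] at h1; linarith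
    have h3 : (⟪(L.orthogonalProjection z : Euc d), x⟫ : ℝ)
        ≤ ‖(L.orthogonalProjection z : Euc d)‖ * ‖x‖ := real_inner_le_norm _ _
    have hx0' : 0 < ‖x‖ := norm_pos_iff.mpr hx0
    have : Real.cos a * ‖x‖ ≤ ‖(L.orthogonalProjection z : Euc d)‖ * ‖x‖ := by
      rw [h2] at hx; linarith
    exact le_of_mul_le_mul_right this hx0'
  · intro h
    replace h : Real.cos a ≤ ‖(L.orthogonalProjection z : Euc d)‖ := h
    refine ⟨(L.orthogonalProjection z : Euc d), SetLike.coe_mem _, ?_, ?_⟩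
    · intro h0
      rw [h0, norm_zero] at h; linarith
    · have h1 : ⟪z - (L.orthogonalProjection z : Euc d), (L.orthogonalProjection z : Euc d)⟫ = 0 :=
        L.starProjection_inner_eq_zero z _ (SetLike.coe_mem _)
      rw [inner_sub_left] at h1
      have h2 : (inner ℝ z ((L.orthogonalProjection z : Euc d)) : ℝ)
          = ‖(L.orthogonalProjection z : Euc d)‖ ^ 2 := by
        rw [← real_inner_self_eq_norm_sq]; linarith
      rw [h2]
      have := norm_nonneg ((L.orthogonalProjection z : Euc d))
      nlinarith

lemma meas_char (d : ℕ) (r : ℝ) (z : Euc d) :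
    MeasurableSet {L : Submodule ℝ (Euc d) | r ≤ ‖projCLM d L z‖} := by
  have hc : IsClosed {P : Euc d →L[ℝ] Euc d | r ≤ ‖P z‖} :=
    isClosed_le continuous_const ((ContinuousLinearMap.apply ℝ (Euc d) z).continuous.norm)
  exact (measurable_projCLM d) hc.measurableSet

lemma meas_E (d : ℕ) (a : ℝ) :
    MeasurableSet {p : Euc d × Submodule ℝ (Euc d) |
      Real.cos a * ‖p.1‖ ≤ ‖projCLM d p.2 p.1‖} := by
  have hm : Measurable fun p : Euc d × Submodule ℝ (Euc d) => (p.1, projCLM d p.2) :=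
    measurable_fst.prodMk ((measurable_projCLM d).comp measurable_snd)
  have hcont : Continuous fun q : Euc d × (Euc d →L[ℝ] Euc d) =>
      ‖q.2 q.1‖ - Real.cos a * ‖q.1‖ := by
    have h1 : Continuous fun q : Euc d × (Euc d →L[ℝ] Euc d) => q.2 q.1 :=
      isBoundedBilinearMap_apply.continuous.comp (continuous_snd.prodMk continuous_fst)
    fun_prop
  have hms : MeasurableSet {q : Euc d × (Euc d →L[ℝ] Euc d) |
      0 ≤ ‖q.2 q.1‖ - Real.cos a * ‖q.1‖} :=
    measurableSet_le measurable_const hcont.measurable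
  have h2 := hm hms
  convert h2 using 1
  ext p
  simp only [mem_setOf_eq, mem_preimage]
  constructor <;> intro h <;> linarith

lemma projCLM_map (d : ℕ) (g : Euc d ≃ₗᵢ[ℝ] Euc d) (L : Submodule ℝ (Euc d)) :
    projCLM d (L.map (g.toLinearEquiv : Euc d →ₗ[ℝ] Euc d)) =
      ((g.toLinearIsometry.toContinuousLinearMap.comp (projCLM d L)).comp
        g.symm.toLinearIsometry.toContinuousLinearMap) := by
  refine ContinuousLinearMap.ext fun x => ?_
  exact Submodule.starProjection_map_apply g L x

lemma measurable_mapL (d : ℕ) (g : Euc d ≃ₗᵢ[ℝ] Euc d) :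
    Measurable (fun L : Submodule ℝ (Euc d) =>
      L.map (g.toLinearEquiv : Euc d →ₗ[ℝ] Euc d)) := by
  have hΦ : Continuous (fun P : Euc d →L[ℝ] Euc d =>
      (g.toLinearIsometry.toContinuousLinearMap.comp P).comp
        g.symm.toLinearIsometry.toContinuousLinearMap) := by
    apply Continuous.clm_comp
    · exact Continuous.clm_comp continuous_const continuous_id
    · exact continuous_const
  intro s hs
  obtain ⟨t, ht, rfl⟩ := MeasurableSpace.measurableSet_comap.mp hs
  have heq : (fun L : Submodule ℝ (Euc d) => L.map (g.toLinearEquiv : Euc d →ₗ[ℝ] Euc d)) ⁻¹'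
      ((fun L : Submodule ℝ (Euc d) =>
        (L.subtypeL.comp (L.orthogonalProjection) : Euc d →L[ℝ] Euc d)) ⁻¹' t)
      = projCLM d ⁻¹' ((fun P : Euc d →L[ℝ] Euc d =>
          (g.toLinearIsometry.toContinuousLinearMap.comp P).comp
            g.symm.toLinearIsometry.toContinuousLinearMap) ⁻¹' t) := by
    ext L
    simp only [mem_preimage]
    rw [show ((L.map (g.toLinearEquiv : Euc d →ₗ[ℝ] Euc d)).subtypeL.comp
        (Submodule.orthogonalProjection _) : Euc d →L[ℝ] Euc d)
        = projCLM d (L.map (g.toLinearEquiv : Euc d →ₗ[ℝ] Euc d)) from rfl, projCLM_map]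
  rw [heq]
  exact measurable_projCLM d (hΦ.measurable ht)

lemma inv_char (d ℓ : ℕ) (ν : Measure (Submodule ℝ (Euc d))) (hν : IsHaarGrassmannian d ℓ ν)
    (r : ℝ) (u z : Euc d) (hu : ‖u‖ = 1) (hz : ‖z‖ = 1) :
    ν {L | r ≤ ‖projCLM d L u‖} = ν {L | r ≤ ‖projCLM d L z‖} := by
  set g : Euc d ≃ₗᵢ[ℝ] Euc d := Submodule.reflection (ℝ ∙ (u - z))ᗮ with hg
  have hgu : g u = z := Submodule.reflection_sub (by rw [hu, hz])
  have hgsymm : g.symm z = u := by rw [← hgu, LinearIsometryEquiv.symm_apply_apply]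
  have hpre : (fun L : Submodule ℝ (Euc d) => L.map (g.toLinearEquiv : Euc d →ₗ[ℝ] Euc d)) ⁻¹'
      {L | r ≤ ‖projCLM d L z‖} = {L | r ≤ ‖projCLM d L u‖} := by
    ext L
    simp only [mem_preimage, mem_setOf_eq, projCLM_map, ContinuousLinearMap.coe_comp',
      Function.comp_apply]
    rw [show g.symm.toLinearIsometry.toContinuousLinearMap z = g.symm z from rfl, hgsymm]
    rw [show ∀ y, g.toLinearIsometry.toContinuousLinearMap y = g y from fun _ => rfl]
    rw [g.norm_map]
  calc ν {L | r ≤ ‖projCLM d L u‖} = ν ((fun L : Submodule ℝ (Euc d) =>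
        L.map (g.toLinearEquiv : Euc d →ₗ[ℝ] Euc d)) ⁻¹' {L | r ≤ ‖projCLM d L z‖}) := by
        rw [hpre]
    _ = (Measure.map (fun L : Submodule ℝ (Euc d) =>
        L.map (g.toLinearEquiv : Euc d →ₗ[ℝ] Euc d)) ν) {L | r ≤ ‖projCLM d L z‖} := by
        rw [Measure.map_apply (measurable_mapL d g) (meas_char d r z)]
    _ = ν {L | r ≤ ‖projCLM d L z‖} := by rw [hν.inv g]

lemma exists_adapted (d ℓ : ℕ) (hℓd : ℓ ≤ d) (L : Submodule ℝ (Euc d))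
    (hL : Module.finrank ℝ L = ℓ) :
    ∃ b : OrthonormalBasis (Fin d) ℝ (Euc d),
      (∀ i : Fin d, (i : ℕ) < ℓ → b i ∈ L) ∧ (∀ i : Fin d, ℓ ≤ (i : ℕ) → b i ∈ Lᗮ) := by
  set b₁ := stdOrthonormalBasis ℝ L with hb₁
  set w : Fin ℓ → Euc d := fun j => (b₁ (Fin.cast hL.symm j) : Euc d) with hw_def
  have hw : Orthonormal ℝ w := by
    rw [orthonormal_iff_ite]
    intro i j
    have h := orthonormal_iff_ite.mp b₁.orthonormal (Fin.cast hL.symm i) (Fin.cast hL.symm j)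
    rw [show (⟪w i, w j⟫ : ℝ) = ⟪b₁ (Fin.cast hL.symm i), b₁ (Fin.cast hL.symm j)⟫ from rfl]
    rw [h]
    congr 1
    simp [Fin.ext_iff]
  set s : Set (Fin d) := {i | (i : ℕ) < ℓ} with hs_def
  set v : Fin d → Euc d := fun i => if h : (i : ℕ) < ℓ then w ⟨i, h⟩ else 0 with hv_def
  have hres : Orthonormal ℝ (s.restrict v) := by
    have hφ : Function.Injective (fun i : s => (⟨i.1, i.2⟩ : Fin ℓ)) := by
      intro i j hij
      simp only [Fin.mk.injEq] at hij
      exact Subtype.ext (Fin.ext hij)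
    have := hw.comp _ hφ
    convert this using 1
    funext i
    exact dif_pos i.2
  obtain ⟨b, hb⟩ := hres.exists_orthonormalBasis_extension_of_card_eq
    (by simp [finrank_euclideanSpace_fin])
  have hspan : Submodule.span ℝ (Set.range w) = L := by
    have h1 : Set.range w = (L.subtype) '' (Set.range b₁) := by
      ext x
      constructor
      · rintro ⟨j, rfl⟩; exact ⟨b₁ (Fin.cast hL.symm j), ⟨_, rfl⟩, rfl⟩
      · rintro ⟨y, ⟨j, rfl⟩, rfl⟩; exact ⟨Fin.cast hL j, by simp [hw_def]⟩
    rw [h1, ← Submodule.map_span, ← b₁.coe_toBasis, Module.Basis.span_eq, Submodule.map_subtype_top]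
  have hmemL : ∀ i : Fin d, (i : ℕ) < ℓ → b i ∈ L := by
    intro i hi
    rw [hb i hi]
    simp only [hv_def, dif_pos hi]
    exact SetLike.coe_mem _
  refine ⟨b, hmemL, fun i hi => ?_⟩
  rw [Submodule.mem_orthogonal]
  intro u hu
  rw [← hspan] at hu
  refine Submodule.span_induction ?_ ?_ ?_ ?_ hu
  · rintro x ⟨j, rfl⟩
    have hιs : ((⟨j.1, lt_of_lt_of_le j.2 hℓd⟩ : Fin d) : ℕ) < ℓ := j.2
    have h1 : w j = b ⟨j.1, lt_of_lt_of_le j.2 hℓd⟩ := by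
      rw [hb _ hιs]
      simp only [hv_def, dif_pos hιs]
    rw [h1]
    have hne : (⟨j.1, lt_of_lt_of_le j.2 hℓd⟩ : Fin d) ≠ i := by
      intro h
      rw [Fin.ext_iff] at h
      simp only at h
      omega
    exact b.orthonormal.2 hne
  · simp
  · intro x y _ _ hx hy; rw [inner_add_left, hx, hy]; ring
  · intro c x _ hx; rw [inner_smul_left, hx]; ring

lemma cos_le_aux {a : ℝ} (ha : 0 < a) (ha1 : a ≤ 1) : Real.cos a ≤ 1 - a ^ 2 / 4 := by
  have hs := Real.sin_gt_sub_cube (by linarith : 0 < a / 2)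
  have h2 : Real.cos a = 1 - 2 * Real.sin (a / 2) ^ 2 := by
    have := Real.cos_two_mul (a / 2)
    have h3 := Real.sin_sq_add_cos_sq (a / 2)
    rw [show 2 * (a / 2) = a by ring] at this
    nlinarith
  have hlb : a / 2 - (a / 2) ^ 3 / 4 ≥ (a / 2) * (15 / 16) := by
    nlinarith [mul_nonneg ha.le (by nlinarith : (0:ℝ) ≤ 1 - a ^ 2)]
  have hsin : Real.sin (a / 2) ≥ (a / 2) * (15 / 16) := by
    linarith [pow_pos (by linarith : (0:ℝ) < a / 2) 3]
  have hsq : Real.sin (a / 2) ^ 2 ≥ ((a / 2) * (15 / 16)) ^ 2 := by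
    have h0 : 0 ≤ (a / 2) * (15 / 16) := by positivity
    nlinarith
  nlinarith

lemma helper_one_le {p : ℝ} (h0 : 0 ≤ p) (h : 1 ≤ p ^ 2) : 1 ≤ p := by nlinarith

lemma helper_le_of_sq {u v : ℝ} (hu : 0 ≤ u) (hv : 0 ≤ v) (h : u ^ 2 ≤ v ^ 2) : u ≤ v := by
  nlinarith [sq_nonneg (u - v), sq_nonneg (u + v)]

lemma helper_key {a c p2 q2 : ℝ} (ha : 0 < a) (ha1 : a ≤ 1) (hc0 : 0 ≤ c)
    (hc : c ≤ 1 - a ^ 2 / 4) (hp : 1 ≤ p2) (hq0 : 0 ≤ q2) (hq : q2 ≤ a ^ 2 / 9) :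
    c ^ 2 * (p2 + q2) ≤ p2 := by
  have ha2 : a ^ 2 ≤ 1 := by nlinarith
  have hc2 : c ^ 2 ≤ 1 - a ^ 2 / 4 := by nlinarith
  have h1 : (1 - a ^ 2 / 4) * (p2 + q2) ≤ p2 := by nlinarith
  nlinarith [mul_le_mul_of_nonneg_right hc2 (by linarith : (0:ℝ) ≤ p2 + q2)]

lemma helper_norm_bound {p2 q2 l dd a s : ℝ} (hp : p2 ≤ 4 * l) (hl : l ≤ dd) (h1 : 1 ≤ dd)
    (hq0 : 0 ≤ q2) (hq : q2 ≤ a ^ 2 / 9) (ha0 : 0 ≤ a) (ha1 : a ≤ 1) (hs : s ^ 2 = dd) :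
    p2 + q2 ≤ (3 * s) ^ 2 := by
  have ha2 : a ^ 2 ≤ 1 := by nlinarith
  nlinarith

lemma card_filter_lt (d ℓ : ℕ) (hℓd : ℓ ≤ d) :
    (Finset.univ.filter fun i : Fin d => (i : ℕ) < ℓ).card = ℓ := by
  have : (Finset.univ.filter fun i : Fin d => (i : ℕ) < ℓ)
      = Finset.map (Fin.castLEEmb hℓd) Finset.univ := by
    ext i
    simp only [Finset.mem_filter, Finset.mem_univ, true_and, Finset.mem_map]
    constructor
    · intro h
      have he : Fin.castLEEmb hℓd ⟨(i : ℕ), h⟩ = i := by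
        simp [Fin.ext_iff]
      exact ⟨⟨(i : ℕ), h⟩, he⟩
    · rintro ⟨j, -, rfl⟩
      simpa using j.2
  rw [this, Finset.card_map, Finset.card_univ, Fintype.card_fin]
lemma slice_bound (d ℓ : ℕ) (hd : 1 ≤ d) (hℓ : 1 ≤ ℓ) (hℓd : ℓ ≤ d)
    (L : Submodule ℝ (Euc d)) (hL : Module.finrank ℝ L = ℓ)
    (a : ℝ) (ha : 0 < a) (ha1 : a < 1) :
    ENNReal.ofReal (((3 * Real.sqrt d)⁻¹ * a) ^ (d - ℓ)) ≤
      (volume.restrict (Metric.closedBall (0 : Euc d) (3 * Real.sqrt d)))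
        {x | Real.cos a * ‖x‖ ≤ ‖projCLM d L x‖} := by
  classical
  obtain ⟨b, hbL, hbO⟩ := exists_adapted d ℓ hℓd L hL
  have hdpos : (0:ℝ) < d := by exact_mod_cast hd
  have hsq : (0:ℝ) < Real.sqrt d := Real.sqrt_pos.mpr hdpos
  set t : ℝ := (3 * Real.sqrt d)⁻¹ with ht_def
  have ht : 0 < t := by positivity
  set lo : Fin d → ℝ := fun i => if (i : ℕ) < ℓ then 1 else 0 with hlo_def
  set hi : Fin d → ℝ := fun i => if (i : ℕ) < ℓ then 2 else t * a with hhi_def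
  set boxPi : Set (Fin d → ℝ) := Set.univ.pi fun i => Icc (lo i) (hi i) with hboxPi_def
  set box : Set (EuclideanSpace ℝ (Fin d)) :=
    (MeasurableEquiv.toLp 2 (Fin d → ℝ)).symm ⁻¹' boxPi with hbox_def
  have hbox_mem : ∀ y : EuclideanSpace ℝ (Fin d), y ∈ box ↔ ∀ i, y i ∈ Icc (lo i) (hi i) := by
    intro y
    constructor
    · intro hy i
      exact hy i (Set.mem_univ i)
    · intro hy i _
      exact hy i
  have hboxPi_meas : MeasurableSet boxPi := MeasurableSet.univ_pi fun i => measurableSet_Icc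
  have hbox_meas : MeasurableSet box :=
    (MeasurableEquiv.toLp 2 (Fin d → ℝ)).symm.measurable hboxPi_meas
  set B : Set (Euc d) := ⇑b.repr ⁻¹' box with hB_def
  -- volume of B
  have hvolB : volume B = ENNReal.ofReal (t * a) ^ (d - ℓ) := by
    rw [hB_def, b.measurePreserving_repr.measure_preimage hbox_meas.nullMeasurableSet,
      hbox_def,
      (EuclideanSpace.volume_preserving_symm_measurableEquiv_toLp (Fin d)).measure_preimage
        hboxPi_meas.nullMeasurableSet,
      hboxPi_def, volume_pi_pi]
    have : ∀ i : Fin d, volume (Icc (lo i) (hi i)) =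
        if (i : ℕ) < ℓ then ENNReal.ofReal 1 else ENNReal.ofReal (t * a) := by
      intro i
      by_cases h : (i : ℕ) < ℓ <;>
        simp [hlo_def, hhi_def, h, Real.volume_Icc] <;> norm_num
    rw [Finset.prod_congr rfl fun i _ => this i, Finset.prod_ite, Finset.prod_const,
      Finset.prod_const]
    have hcard : (Finset.univ.filter fun i : Fin d => ¬ (i : ℕ) < ℓ).card = d - ℓ := by
      have h1 := card_filter_lt d ℓ hℓd
      have h2 := Finset.card_filter_add_card_filter_not
        (s := (Finset.univ : Finset (Fin d))) (p := fun i : Fin d => (i : ℕ) < ℓ)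
      rw [Finset.card_univ, Fintype.card_fin] at h2
      omega
    rw [hcard]
    simp
  have hcard2 : (Finset.univ.filter fun i : Fin d => ¬ (i : ℕ) < ℓ).card = d - ℓ := by
    have h1 := card_filter_lt d ℓ hℓd
    have h2 := Finset.card_filter_add_card_filter_not
      (s := (Finset.univ : Finset (Fin d))) (p := fun i : Fin d => (i : ℕ) < ℓ)
    rw [Finset.card_univ, Fintype.card_fin] at h2
    omega
  -- containment
  have hsub : B ⊆ {x : Euc d | Real.cos a * ‖x‖ ≤ ‖projCLM d L x‖} ∩
      Metric.closedBall (0 : Euc d) (3 * Real.sqrt d) := by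
    intro x hx
    set y : EuclideanSpace ℝ (Fin d) := b.repr x with hy_def
    have hyc : ∀ i, y i ∈ Icc (lo i) (hi i) := (hbox_mem y).mp hx
    set sfin := Finset.univ.filter (fun i : Fin d => (i : ℕ) < ℓ) with hsfin
    set tfin := Finset.univ.filter (fun i : Fin d => ¬ (i : ℕ) < ℓ) with htfin
    set P : Euc d := ∑ i ∈ sfin, y i • b i with hP_def
    set Q : Euc d := ∑ i ∈ tfin, y i • b i with hQ_def
    have hxPQ : P + Q = x := by
      rw [hP_def, hQ_def, hsfin, htfin, Finset.sum_filter_add_sum_filter_not]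
      exact b.sum_repr x
    have hPL : P ∈ L := Submodule.sum_mem _ fun i hi' =>
      Submodule.smul_mem _ _ (hbL i (Finset.mem_filter.mp hi').2)
    have hQO : Q ∈ Lᗮ := Submodule.sum_mem _ fun i hi' =>
      Submodule.smul_mem _ _ (hbO i (not_lt.mp (Finset.mem_filter.mp hi').2))
    have hproj : projCLM d L x = P := by
      have h1 : projCLM d L P = P := Submodule.starProjection_eq_self_iff.mpr hPL
      have h2 : projCLM d L Q = 0 := by
        show ((L.orthogonalProjectionOnto Q : L) : Euc d) = 0
        rw [Submodule.orthogonalProjectionOnto_apply_of_mem_orthogonal hQO]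
        rfl
      rw [← hxPQ, map_add, h1, h2, add_zero]
    have hnormsum : ∀ s : Finset (Fin d), ‖∑ i ∈ s, y i • b i‖ ^ 2 = ∑ i ∈ s, y i ^ 2 := by
      intro s
      have h := b.orthonormal.inner_sum (fun i => y i) (fun i => y i) s
      rw [← real_inner_self_eq_norm_sq, h]
      simp [pow_two]
    have hP2 : ‖P‖ ^ 2 = ∑ i ∈ sfin, y i ^ 2 := hnormsum _
    have hQ2 : ‖Q‖ ^ 2 = ∑ i ∈ tfin, y i ^ 2 := hnormsum _
    have hPQorth : (⟪P, Q⟫ : ℝ) = 0 := Submodule.inner_right_of_mem_orthogonal hPL hQO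
    have hx2 : ‖x‖ ^ 2 = ‖P‖ ^ 2 + ‖Q‖ ^ 2 := by
      rw [← hxPQ, norm_add_sq_real, hPQorth]
      ring
    have hℓR : (1:ℝ) ≤ (ℓ:ℝ) := by exact_mod_cast hℓ
    have hℓdR : (ℓ:ℝ) ≤ (d:ℝ) := by exact_mod_cast hℓd
    have hPlow : (1:ℝ) ≤ ‖P‖ ^ 2 := by
      rw [hP2]
      have : ∑ i ∈ sfin, (1:ℝ) ≤ ∑ i ∈ sfin, y i ^ 2 := by
        refine Finset.sum_le_sum fun i hi' => ?_
        have hilt := (Finset.mem_filter.mp hi').2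
        have h1 := (hyc i).1
        rw [hlo_def] at h1
        simp only [hilt, if_true] at h1
        nlinarith
      have hc : ∑ i ∈ sfin, (1:ℝ) = (ℓ:ℝ) := by
        rw [Finset.sum_const, hsfin, card_filter_lt d ℓ hℓd, nsmul_eq_mul, mul_one]
      linarith
    have hPhigh : ‖P‖ ^ 2 ≤ 4 * (ℓ:ℝ) := by
      rw [hP2]
      have : ∑ i ∈ sfin, y i ^ 2 ≤ ∑ i ∈ sfin, (4:ℝ) := by
        refine Finset.sum_le_sum fun i hi' => ?_
        have hilt := (Finset.mem_filter.mp hi').2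
        have h1 := (hyc i).1
        have h2 := (hyc i).2
        rw [hlo_def] at h1
        rw [hhi_def] at h2
        simp only [hilt, if_true] at h1 h2
        nlinarith
      have hc : ∑ i ∈ sfin, (4:ℝ) = 4 * (ℓ:ℝ) := by
        rw [Finset.sum_const, hsfin, card_filter_lt d ℓ hℓd, nsmul_eq_mul]; ring
      linarith
    have h9d : ((3:ℝ) * Real.sqrt d) ^ 2 = 9 * (d:ℝ) := by
      rw [mul_pow, Real.sq_sqrt hdpos.le]; norm_num
    have htsq : (d:ℝ) * t ^ 2 = 1 / 9 := by
      rw [ht_def, inv_pow, h9d]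
      field_simp
    have hQhigh : ‖Q‖ ^ 2 ≤ a ^ 2 / 9 := by
      rw [hQ2]
      have h1 : ∑ i ∈ tfin, y i ^ 2 ≤ ∑ i ∈ tfin, (t * a) ^ 2 := by
        refine Finset.sum_le_sum fun i hi' => ?_
        have hilt := (Finset.mem_filter.mp hi').2
        have h1 := (hyc i).1
        have h2 := (hyc i).2
        rw [hlo_def] at h1
        rw [hhi_def] at h2
        simp only [hilt, if_false, if_neg hilt] at h1 h2
        nlinarith
      have hc : ∑ i ∈ tfin, (t * a) ^ 2 = ((d - ℓ : ℕ) : ℝ) * (t * a) ^ 2 := by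
        rw [Finset.sum_const, htfin, hcard2, nsmul_eq_mul]
      have hdl : ((d - ℓ : ℕ) : ℝ) ≤ (d:ℝ) := by
        have : d - ℓ ≤ d := Nat.sub_le d ℓ
        exact_mod_cast this
      have h3 : ((d - ℓ : ℕ) : ℝ) * (t * a) ^ 2 ≤ (d:ℝ) * (t * a) ^ 2 := by
        refine mul_le_mul_of_nonneg_right hdl (by positivity)
      have h4 : (d:ℝ) * (t * a) ^ 2 = a ^ 2 / 9 := by
        rw [mul_pow]
        nlinarith [htsq]
      linarith
    have hP0 : (0:ℝ) ≤ ‖P‖ := norm_nonneg P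
    have hπ := Real.pi_gt_three
    constructor
    · show Real.cos a * ‖x‖ ≤ ‖projCLM d L x‖
      rw [hproj]
      have hcos := cos_le_aux ha ha1.le
      have hcos0 : 0 ≤ Real.cos a :=
        Real.cos_nonneg_of_mem_Icc ⟨by linarith, by linarith⟩
      have hkey : (Real.cos a * ‖x‖) ^ 2 ≤ ‖P‖ ^ 2 := by
        rw [mul_pow, hx2]
        exact helper_key ha ha1.le hcos0 hcos hPlow (sq_nonneg _) hQhigh
      exact helper_le_of_sq (mul_nonneg hcos0 (norm_nonneg x)) hP0 hkey
    · rw [Metric.mem_closedBall, dist_zero_right]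
      have h9 : ‖x‖ ^ 2 ≤ (3 * Real.sqrt d) ^ 2 := by
        rw [hx2]
        exact helper_norm_bound hPhigh hℓdR (by exact_mod_cast hd) (sq_nonneg _) hQhigh ha.le
          ha1.le (Real.sq_sqrt hdpos.le)
      exact helper_le_of_sq (norm_nonneg x) (by positivity) h9
  rw [Measure.restrict_apply' measurableSet_closedBall]
  calc ENNReal.ofReal ((t * a) ^ (d - ℓ)) = ENNReal.ofReal (t * a) ^ (d - ℓ) := by
        rw [ENNReal.ofReal_pow (by positivity)]
    _ = volume B := hvolB.symm
    _ ≤ volume ({x : Euc d | Real.cos a * ‖x‖ ≤ ‖projCLM d L x‖} ∩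
        Metric.closedBall (0 : Euc d) (3 * Real.sqrt d)) := measure_mono hsub

/-- The Haar measure of the set of `ℓ`-dimensional subspaces making angle at most `a`
with a fixed unit vector `z` is at least of order `a^{d−ℓ}`. -/
theorem haar_measure_subspaces_small_angle (d ℓ : ℕ) (hd : 1 ≤ d) (hℓ : 1 ≤ ℓ) (hℓd : ℓ ≤ d)
    (z : Euc d) (hz : ‖z‖ = 1)
    (ν : Measure (Submodule ℝ (Euc d))) (hν : IsHaarGrassmannian d ℓ ν) :
    ∃ c₄ c : ℝ, 0 < c₄ ∧ 0 < c ∧ ∀ a : ℝ, 0 < a → a < c₄ →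
      ENNReal.ofReal (c * a ^ (d - ℓ)) ≤
        ν {L | ∃ x : Euc d, x ∈ L ∧ x ≠ 0 ∧ Real.cos a * ‖x‖ ≤ (inner ℝ z x : ℝ)} := by
  classical
  haveI := hν.prob
  have hdpos : (0:ℝ) < d := by exact_mod_cast hd
  have hsq : (0:ℝ) < Real.sqrt d := Real.sqrt_pos.mpr hdpos
  set R : ℝ := 3 * Real.sqrt d with hR_def
  have hR : 0 < R := by positivity
  set K : ℝ≥0∞ := volume (Metric.closedBall (0 : Euc d) R) with hK_def
  have hK0 : 0 < K := Metric.measure_closedBall_pos volume 0 hR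
  have hKfin : K < ∞ := measure_closedBall_lt_top
  have hKt : 0 < K.toReal := ENNReal.toReal_pos hK0.ne' hKfin.ne
  set t0 : ℝ := (3 * Real.sqrt d)⁻¹ with ht0_def
  have ht0 : 0 < t0 := by positivity
  refine ⟨1, t0 ^ (d - ℓ) / K.toReal, one_pos, by positivity, ?_⟩
  intro a ha ha1
  have hπ := Real.pi_gt_three
  have hcos_pos : 0 < Real.cos a := Real.cos_pos_of_mem_Ioo ⟨by linarith, by linarith⟩
  rw [char_aux d a hcos_pos z]
  set μ : Measure (Euc d) := volume.restrict (Metric.closedBall (0 : Euc d) R) with hμ_def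
  set E : Set (Euc d × Submodule ℝ (Euc d)) :=
    {p | Real.cos a * ‖p.1‖ ≤ ‖projCLM d p.2 p.1‖} with hE_def
  have hE : MeasurableSet E := meas_E d a
  set v : ℝ≥0∞ := ν {L | Real.cos a ≤ ‖projCLM d L z‖} with hv_def
  -- first slicing
  have h1 : (μ.prod ν) E = ∫⁻ x, ν (Prod.mk x ⁻¹' E) ∂μ := Measure.prod_apply hE
  have hslice1 : ∀ x : Euc d, x ≠ 0 → ν (Prod.mk x ⁻¹' E) = v := by
    intro x hx
    have hxn : 0 < ‖x‖ := norm_pos_iff.mpr hx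
    set u : Euc d := ‖x‖⁻¹ • x with hu_def
    have hun : ‖u‖ = 1 := norm_smul_inv_norm hx
    have hset : Prod.mk x ⁻¹' E = {L | Real.cos a ≤ ‖projCLM d L u‖} := by
      ext L
      simp only [hE_def, mem_preimage, mem_setOf_eq]
      have hmap : projCLM d L u = ‖x‖⁻¹ • projCLM d L x := by
        rw [hu_def]
        exact ContinuousLinearMap.map_smul _ _ _
      rw [hmap, norm_smul, norm_inv, norm_norm]
      constructor
      · intro h
        calc Real.cos a = ‖x‖⁻¹ * (Real.cos a * ‖x‖) := by field_simp
          _ ≤ ‖x‖⁻¹ * ‖projCLM d L x‖ :=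
            mul_le_mul_of_nonneg_left h (inv_nonneg.mpr hxn.le)
      · intro h
        have h2 := mul_le_mul_of_nonneg_left h hxn.le
        calc Real.cos a * ‖x‖ = ‖x‖ * Real.cos a := mul_comm _ _
          _ ≤ ‖x‖ * (‖x‖⁻¹ * ‖projCLM d L x‖) := h2
          _ = ‖projCLM d L x‖ := by field_simp
    rw [hset, hv_def]
    exact inv_char d ℓ ν hν _ u z hun hz
  have hsing : volume ({(0 : Euc d)} : Set (Euc d)) = 0 := by
    haveI : Nontrivial (Euc d) := by
      refine ⟨⟨0, EuclideanSpace.single (⟨0, hd⟩ : Fin d) (1:ℝ), fun hc => ?_⟩⟩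
      have := congrArg (fun y : Euc d => y ⟨0, hd⟩) hc
      simp at this
    exact measure_singleton _
  have hμ0 : μ ({(0 : Euc d)} : Set (Euc d)) = 0 :=
    le_antisymm (le_trans (Measure.le_iff'.1 Measure.restrict_le_self _ ) hsing.le) (zero_le)
  have hae : ∀ᵐ x ∂μ, ν (Prod.mk x ⁻¹' E) = v := by
    rw [ae_iff]
    refine measure_mono_null ?_ hμ0
    intro x hx
    rw [mem_setOf_eq] at hx
    rw [mem_singleton_iff]
    by_contra h0
    exact hx (hslice1 x h0)
  have h1' : (μ.prod ν) E = v * K := by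
    rw [h1, lintegral_congr_ae hae, lintegral_const, Measure.restrict_apply_univ]
  have h2 : (μ.prod ν) E = ∫⁻ L, μ ((fun x => (x, L)) ⁻¹' E) ∂ν := Measure.prod_apply_symm hE
  have haeL : ∀ᵐ L ∂ν, ENNReal.ofReal ((t0 * a) ^ (d - ℓ)) ≤ μ ((fun x => (x, L)) ⁻¹' E) := by
    rw [ae_iff]
    refine measure_mono_null ?_ hν.dim
    intro L hL
    rw [mem_setOf_eq] at hL
    rw [mem_setOf_eq]
    intro hfin
    exact hL (slice_bound d ℓ hd hℓ hℓd L hfin a ha ha1)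
  have h2' : ENNReal.ofReal ((t0 * a) ^ (d - ℓ)) ≤ (μ.prod ν) E := by
    rw [h2]
    calc ENNReal.ofReal ((t0 * a) ^ (d - ℓ))
        = ∫⁻ _, ENNReal.ofReal ((t0 * a) ^ (d - ℓ)) ∂ν := by
          rw [lintegral_const, measure_univ, mul_one]
      _ ≤ ∫⁻ L, μ ((fun x => (x, L)) ⁻¹' E) ∂ν := lintegral_mono_ae haeL
  have hfinal : ENNReal.ofReal ((t0 * a) ^ (d - ℓ)) ≤ v * K := h1' ▸ h2'
  have hconv : ENNReal.ofReal (t0 ^ (d - ℓ) / K.toReal * a ^ (d - ℓ))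
      = ENNReal.ofReal ((t0 * a) ^ (d - ℓ)) / K := by
    rw [show t0 ^ (d - ℓ) / K.toReal * a ^ (d - ℓ) = (t0 * a) ^ (d - ℓ) / K.toReal by
      rw [mul_pow]; ring]
    rw [ENNReal.ofReal_div_of_pos hKt, ENNReal.ofReal_toReal hKfin.ne]
  rw [hconv]
  rw [ENNReal.div_le_iff_le_mul (Or.inl hK0.ne') (Or.inl hKfin.ne)]
  exact hfinal


end
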